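/- Let σ_θ = |ψ_θ⟩⟨ψ_θ| with ψ_θ = (|0⟩ + e^{iθ}|1⟩)/√2, θ ∈ (α, β) a bounded open interval. For any measurable space (Ω, Σ), any POVM N: Σ → M₂(ℂ), and any N-integrable function θ̂: Ω → ℝ, it is impossible that ∫_Ω θ̂ dP^N_{σ_θ} = θ for all θ ∈ (α, β), where P^N_{σ_θ}(A) = tr[σ_θ N(A)]. That is, no unbiased estimator of θ exists for any measurement. -/

import Mathlib

open scoped ComplexOrder

/-- The pure clock state `σ_θ = |ψ_θ⟩⟨ψ_θ|` with `ψ_θ = (|0⟩ + e^{iθ}|1⟩)/√2`. -/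
noncomputable def sigmaPure (θ : ℝ) : Matrix (Fin 2) (Fin 2) ℂ :=
  (1/2 : ℂ) • !![1, Complex.exp (-Complex.I * (θ : ℂ));
                 Complex.exp (Complex.I * (θ : ℂ)), 1]

lemma sigma_trace_re_eq (θ : ℝ) (M : Matrix (Fin 2) (Fin 2) ℂ) (hM : M.IsHermitian) :
    (sigmaPure θ * M).trace.re =
      ((M 0 0).re + (M 1 1).re) / 2 + Real.cos θ * (M 0 1).re - Real.sin θ * (M 0 1).im := by
  have h10 : M 1 0 = starRingEnd ℂ (M 0 1) := (hM.apply 1 0).symm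
  have e1 : Complex.exp (Complex.I * (θ : ℂ)) = Real.cos θ + Real.sin θ * Complex.I := by
    rw [mul_comm, Complex.exp_mul_I]; push_cast; ring
  have e2 : Complex.exp (-Complex.I * (θ : ℂ)) = Real.cos θ - Real.sin θ * Complex.I := by
    have h : -Complex.I * (θ : ℂ) = (-θ : ℝ) * Complex.I := by push_cast; ring
    rw [h, Complex.exp_mul_I]; push_cast; simp; ring
  rw [Matrix.trace_fin_two]
  simp only [sigmaPure, Matrix.smul_mul, Matrix.smul_apply, Matrix.mul_apply,
    Fin.sum_univ_two, Matrix.cons_val', Matrix.cons_val_zero, Matrix.cons_val_one,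
    Matrix.head_cons, Matrix.empty_val', Matrix.cons_val_fin_one, Matrix.head_fin_const,
    smul_eq_mul, e1, e2, h10]
  simp [Complex.add_re, Complex.mul_re, Complex.mul_im, Complex.conj_re, Complex.conj_im,
    Complex.sub_re, Complex.sub_im, Complex.add_im, Complex.ofReal_re, Complex.ofReal_im,
    Complex.I_re, Complex.I_im, Complex.cos_ofReal_re, Complex.sin_ofReal_re]
  ring

lemma sigma_trace_re_nonneg (θ : ℝ) (M : Matrix (Fin 2) (Fin 2) ℂ) (hM : M.PosSemidef) :
    0 ≤ (sigmaPure θ * M).trace.re := by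
  have hx := hM.dotProduct_mulVec_nonneg ![1, Complex.exp (Complex.I * (θ : ℂ))]
  rw [Complex.le_def] at hx
  have hre := hx.1
  have h10 : M 1 0 = starRingEnd ℂ (M 0 1) := (hM.1.apply 1 0).symm
  have e1 : Complex.exp (Complex.I * (θ : ℂ)) = Real.cos θ + Real.sin θ * Complex.I := by
    rw [mul_comm, Complex.exp_mul_I]; push_cast; ring
  have hpyt := Real.sin_sq_add_cos_sq θ
  rw [sigma_trace_re_eq θ M hM.1]
  simp only [dotProduct, Matrix.mulVec, Fin.sum_univ_two, Pi.star_apply,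
    Matrix.cons_val_zero, Matrix.cons_val_one, Matrix.head_cons, e1, h10,
    star_one, Complex.star_def, map_add, map_mul, Complex.conj_ofReal, Complex.conj_I] at hre
  simp only [Complex.zero_re, Complex.add_re, Complex.mul_re, Complex.mul_im,
    Complex.sub_re, Complex.sub_im, Complex.add_im, Complex.ofReal_re, Complex.ofReal_im,
    Complex.I_re, Complex.I_im, Complex.conj_re, Complex.conj_im, Complex.one_re,
    Complex.one_im, Complex.neg_re, Complex.neg_im, one_mul, mul_one, mul_zero, zero_mul,
    sub_zero, zero_add, add_zero, neg_zero, zero_sub, mul_neg, neg_neg, neg_mul] at hre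
  have e3 : (M 1 1).re * (Real.sin θ^2 + Real.cos θ^2) = (M 1 1).re := by rw [hpyt]; ring
  nlinarith [hre, e3]

lemma trig1' (m h : ℝ) :
    Real.cos (m - 2*h) + (2 * Real.cos h) * Real.cos (m + h)
      = (2 * Real.cos h) * Real.cos (m - h) + Real.cos (m + 2*h) := by
  simp [Real.cos_sub, Real.cos_add, Real.sin_sub, Real.sin_add,
    Real.cos_two_mul, Real.sin_two_mul]
  ring

lemma trig2' (m h : ℝ) :
    Real.sin (m - 2*h) + (2 * Real.cos h) * Real.sin (m + h)
      = (2 * Real.cos h) * Real.sin (m - h) + Real.sin (m + 2*h) := by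
  simp [Real.cos_sub, Real.cos_add, Real.sin_sub, Real.sin_add,
    Real.cos_two_mul, Real.sin_two_mul]
  ring

/-- No unbiased estimator of the phase `θ` exists for any measurement: for any POVM `N`
on a measurable space `Ω` (positive semidefinite valued, `N ∅ = 0`, `N Ω = I`, countably
additive) with outcome probability measures `P θ (s) = tr[σ_θ N(s)]`, there is no
`P θ`-integrable real function `θ̂` whose expectation equals `θ` for all `θ` in a
nondegenerate interval `(α, β)`. -/
theorem no_unbiased_estimator (α β : ℝ) (hαβ : α < β)
    (Ω : Type*) [MeasurableSpace Ω]
    (N : Set Ω → Matrix (Fin 2) (Fin 2) ℂ)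
    (hpos : ∀ s : Set Ω, MeasurableSet s → (N s).PosSemidef)
    (hempty : N ∅ = 0)
    (huniv : N Set.univ = 1)
    (hadd : ∀ s : ℕ → Set Ω, (∀ n, MeasurableSet (s n)) →
      Pairwise (Function.onFun Disjoint s) →
      HasSum (fun n => N (s n)) (N (⋃ n, s n)))
    (P : ℝ → MeasureTheory.Measure Ω)
    (hP : ∀ θ : ℝ, ∀ s : Set Ω, MeasurableSet s →
      P θ s = ENNReal.ofReal ((sigmaPure θ * N s).trace.re))
    (est : Ω → ℝ)
    (hint : ∀ θ ∈ Set.Ioo α β, MeasureTheory.Integrable est (P θ)) :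
    ¬ ∀ θ ∈ Set.Ioo α β, (∫ ω, est ω ∂(P θ)) = θ := by
  intro hunb
  set m : ℝ := (α + β) / 2 with hm
  set h : ℝ := min 1 ((β - α) / 8) with hh
  have hh0 : 0 < h := lt_min one_pos (by linarith)
  have hh1 : h ≤ 1 := min_le_left _ _
  have hh8 : h ≤ (β - α) / 8 := min_le_right _ _
  set B : ℝ := 2 * Real.cos h with hBdef
  have hπ := Real.pi_gt_three
  have hcospos : 0 < Real.cos h :=
    Real.cos_pos_of_mem_Ioo ⟨by linarith, by linarith⟩
  have hcoslt : Real.cos h < 1 := by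
    have := Real.cos_lt_cos_of_nonneg_of_le_pi (le_refl (0:ℝ)) (by linarith) hh0
    simpa using this
  have hB0 : 0 ≤ B := by positivity
  set θ₁ := m - 2*h with hθ₁
  set θ₂ := m - h with hθ₂
  set θ₃ := m + h with hθ₃
  set θ₄ := m + 2*h with hθ₄
  have hmem : ∀ θ ∈ ({θ₁, θ₂, θ₃, θ₄} : Set ℝ), θ ∈ Set.Ioo α β := by
    intro θ hθ
    simp only [Set.mem_insert_iff, Set.mem_singleton_iff] at hθ
    rcases hθ with rfl | rfl | rfl | rfl <;>
      constructor <;> simp only [hθ₁, hθ₂, hθ₃, hθ₄, hm] <;> linarith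
  have h1 : θ₁ ∈ Set.Ioo α β := hmem θ₁ (by simp)
  have h2 : θ₂ ∈ Set.Ioo α β := hmem θ₂ (by simp)
  have h3 : θ₃ ∈ Set.Ioo α β := hmem θ₃ (by simp)
  have h4 : θ₄ ∈ Set.Ioo α β := hmem θ₄ (by simp)
  -- the measure identity
  have hmeas : P θ₁ + (ENNReal.ofReal B) • P θ₃ = (ENNReal.ofReal B) • P θ₂ + P θ₄ := by
    ext s hs
    have hherm := (hpos s hs).1
    have t1 := sigma_trace_re_eq θ₁ (N s) hherm
    have t2 := sigma_trace_re_eq θ₂ (N s) hherm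
    have t3 := sigma_trace_re_eq θ₃ (N s) hherm
    have t4 := sigma_trace_re_eq θ₄ (N s) hherm
    have n1 := sigma_trace_re_nonneg θ₁ (N s) (hpos s hs)
    have n2 := sigma_trace_re_nonneg θ₂ (N s) (hpos s hs)
    have n3 := sigma_trace_re_nonneg θ₃ (N s) (hpos s hs)
    have n4 := sigma_trace_re_nonneg θ₄ (N s) (hpos s hs)
    have key : (sigmaPure θ₁ * N s).trace.re + B * (sigmaPure θ₃ * N s).trace.re
        = B * (sigmaPure θ₂ * N s).trace.re + (sigmaPure θ₄ * N s).trace.re := by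
      rw [t1, t2, t3, t4]
      have c1 := trig1' m h
      have c2 := trig2' m h
      simp only [hθ₁, hθ₂, hθ₃, hθ₄, hBdef]
      linear_combination (N s 0 1).re * c1 - (N s 0 1).im * c2
    simp only [MeasureTheory.Measure.add_apply, MeasureTheory.Measure.smul_apply,
      smul_eq_mul, hP _ s hs]
    rw [← ENNReal.ofReal_mul hB0, ← ENNReal.ofReal_mul hB0,
      ← ENNReal.ofReal_add n1 (mul_nonneg hB0 n3), ← ENNReal.ofReal_add (mul_nonneg hB0 n2) n4, key]
  -- integrate the estimator against both sides
  have i1 := hint θ₁ h1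
  have i2 := hint θ₂ h2
  have i3 := hint θ₃ h3
  have i4 := hint θ₄ h4
  have hBne : (ENNReal.ofReal B) ≠ ⊤ := ENNReal.ofReal_ne_top
  have hInt : (∫ ω, est ω ∂(P θ₁ + (ENNReal.ofReal B) • P θ₃))
      = ∫ ω, est ω ∂((ENNReal.ofReal B) • P θ₂ + P θ₄) := by rw [hmeas]
  rw [MeasureTheory.integral_add_measure i1 (i3.smul_measure hBne),
    MeasureTheory.integral_add_measure (i2.smul_measure hBne) i4,
    MeasureTheory.integral_smul_measure, MeasureTheory.integral_smul_measure,
    ENNReal.toReal_ofReal hB0] at hInt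
  rw [hunb θ₁ h1, hunb θ₂ h2, hunb θ₃ h3, hunb θ₄ h4] at hInt
  simp only [smul_eq_mul, hθ₁, hθ₂, hθ₃, hθ₄] at hInt
  -- hInt : (m - 2h) + B*(m+h) = B*(m-h) + (m+2h), so 2Bh = 4h, B = 2, cos h = 1, contradiction
  nlinarith [hInt, hh0, hcoslt]
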